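/- If real numbers d_1,...,d_s satisfy sum_{i=1}^s d_i * [1 + exp(-(x - μ_i)/σ_i)]^{-1} = 0 for all real x, where the pairs (μ_i, σ_i) are pairwise distinct and all σ_i > 0, then d_i = 0 for all i. -/

import Mathlib

open Complex Filter Topology

set_option maxHeartbeats 1000000

/-- If `|Im w| < π`, then `1 + exp w ≠ 0`. -/
lemma aux_one_add_exp_ne_zero {w : ℂ} (hw : |w.im| < Real.pi) :
    1 + Complex.exp w ≠ 0 := by
  intro h
  have he : Complex.exp w = -1 := by linear_combination h
  have h2 : Complex.exp (2 * w) = 1 := by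
    rw [two_mul, Complex.exp_add, he]; ring
  rw [Complex.exp_eq_one_iff] at h2
  obtain ⟨n, hn⟩ := h2
  have hwn : w = (n : ℂ) * Real.pi * I := by linear_combination hn / 2
  have him : w.im = (n : ℝ) * Real.pi := by
    rw [hwn]; simp
  rcases eq_or_ne n 0 with h0 | h0
  · subst h0
    simp at hwn
    rw [hwn] at he
    simp at he
    norm_num at he
  · have : (1 : ℝ) ≤ |(n : ℝ)| := by
      exact_mod_cast Int.one_le_abs h0
    have hpi : (0 : ℝ) < Real.pi := Real.pi_pos
    rw [him, abs_mul, abs_of_pos hpi] at hw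
    nlinarith

/-- If `Im w = -π` and `Re w ≠ 0`, then `1 + exp w ≠ 0`. -/
lemma aux_one_add_exp_ne_zero' {w : ℂ} (him : w.im = -Real.pi) (hre : w.re ≠ 0) :
    1 + Complex.exp w ≠ 0 := by
  intro h
  have hw : w = (w.re : ℂ) - Real.pi * I := by
    apply Complex.ext <;> simp [him]
  rw [hw, Complex.exp_sub, Complex.exp_pi_mul_I] at h
  have h' : Complex.exp (w.re : ℂ) = 1 := by
    field_simp at h
    linear_combination -h
  rw [← Complex.ofReal_exp] at h'
  have h'' : Real.exp w.re = 1 := by exact_mod_cast h'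
  exact hre (by simpa using h'')

/-- `w / (exp w - 1) → 1` as `w → 0`, `w ≠ 0`. -/
lemma aux_tendsto_div_exp_sub_one :
    Tendsto (fun w : ℂ => w / (Complex.exp w - 1)) (𝓝[≠] (0 : ℂ)) (𝓝 1) := by
  have hd : HasDerivAt Complex.exp 1 0 := by
    simpa using Complex.hasDerivAt_exp 0
  have h1 : Tendsto (fun w : ℂ => (Complex.exp w - 1) / w) (𝓝[≠] (0 : ℂ)) (𝓝 1) := by
    have h0 := hasDerivAt_iff_tendsto_slope.mp hd
    exact h0.congr fun w => by simp [slope_def_field]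
  have h2 := h1.inv₀ (by norm_num)
  simpa [inv_div] using h2

theorem logistic_combination_zero_of_distinct_params
    (s : ℕ) (d μ σ : Fin s → ℝ)
    (hσ : ∀ i, 0 < σ i)
    (hdist : Function.Injective (fun i => (μ i, σ i)))
    (h : ∀ x : ℝ, ∑ i, d i * (1 + Real.exp (-(x - μ i) / σ i))⁻¹ = 0) :
    ∀ i, d i = 0 := by
  by_contra hc
  push_neg at hc
  obtain ⟨i0, hi0⟩ := hc
  classical
  set T : Finset (Fin s) := Finset.univ.filter (fun i => d i ≠ 0) with hT
  have hi0T : i0 ∈ T := by simp [hT, hi0]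
  obtain ⟨j, hjT, hjmin⟩ := T.exists_min_image σ ⟨i0, hi0T⟩
  have hdj : d j ≠ 0 := by simpa [hT] using hjT
  have hπ : (0 : ℝ) < Real.pi := Real.pi_pos
  have hσj : (0 : ℝ) < σ j := hσ j
  -- the complex function
  set f : ℂ → ℂ := fun z => ∑ i ∈ T, (d i : ℂ) * (1 + Complex.exp (-(z - μ i) / σ i))⁻¹
    with hf
  -- the strip
  set S : Set ℂ := Complex.im ⁻¹' Set.Ioo (-(Real.pi * σ j)) (Real.pi * σ j) with hS
  have hSopen : IsOpen S := isOpen_Ioo.preimage Complex.continuous_im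
  have hSconv : Convex ℝ S := (convex_Ioo _ _).linear_preimage Complex.imLm
  -- denominators do not vanish on the strip
  have hden : ∀ i ∈ T, ∀ z ∈ S, 1 + Complex.exp (-(z - (μ i : ℂ)) / (σ i : ℂ)) ≠ 0 := by
    intro i hiT z hz
    apply aux_one_add_exp_ne_zero
    have him : (-(z - (μ i : ℂ)) / (σ i : ℂ)).im = -z.im / σ i := by
      simp [Complex.div_ofReal_im]
    rw [him, abs_div, abs_neg, abs_of_pos (hσ i), div_lt_iff₀ (hσ i)]
    have h1 : |z.im| < Real.pi * σ j := abs_lt.mpr ⟨hz.1, hz.2⟩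
    have h2 : σ j ≤ σ i := hjmin i hiT
    nlinarith
  -- f is analytic on the strip
  have hfa : AnalyticOnNhd ℂ f S := by
    apply DifferentiableOn.analyticOnNhd _ hSopen
    intro z hz
    apply DifferentiableAt.differentiableWithinAt
    apply DifferentiableAt.fun_sum
    intro i hiT
    apply DifferentiableAt.const_mul
    have ha : DifferentiableAt ℂ (fun y : ℂ => 1 + Complex.exp (-(y - (μ i:ℂ)) / (σ i:ℂ))) z := by
      apply DifferentiableAt.const_add
      apply DifferentiableAt.cexp
      exact (differentiableAt_id.sub_const _).neg.div_const _
    exact ha.inv (hden i hiT z hz)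
  -- f vanishes on the reals
  have hfreal : ∀ x : ℝ, f (x : ℂ) = 0 := by
    intro x
    have h0 := h x
    have hsub : f (x : ℂ)
        = ∑ i : Fin s, (d i : ℂ) * (1 + Complex.exp (-((x:ℂ) - μ i) / σ i))⁻¹ := by
      simp only [hf]
      apply Finset.sum_subset (Finset.subset_univ T)
      intro i _ hi
      have hdi : d i = 0 := by simpa [hT] using hi
      simp [hdi]
    rw [hsub]
    have hcast : ∑ i : Fin s, (d i : ℂ) * (1 + Complex.exp (-((x:ℂ) - μ i) / σ i))⁻¹
        = ((∑ i, d i * (1 + Real.exp (-(x - μ i) / σ i))⁻¹ : ℝ) : ℂ) := by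
      push_cast
      rfl
    rw [hcast, h0, Complex.ofReal_zero]
  -- f vanishes on the strip
  have h0S : (0 : ℂ) ∈ S := by
    simp only [hS, Set.mem_preimage, Complex.zero_im, Set.mem_Ioo]
    constructor <;> nlinarith
  have htend0 : Tendsto (fun t : ℝ => (t : ℂ)) (𝓝[>] (0:ℝ)) (𝓝[≠] (0:ℂ)) := by
    apply tendsto_nhdsWithin_of_tendsto_nhds_of_eventually_within
    · simpa using (Complex.continuous_ofReal.tendsto 0).mono_left nhdsWithin_le_nhds
    · filter_upwards [self_mem_nhdsWithin] with t ht
      simp only [Set.mem_compl_iff, Set.mem_singleton_iff]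
      exact_mod_cast ne_of_gt ht
  have hfreq : ∃ᶠ z in 𝓝[≠] (0:ℂ), f z = 0 :=
    htend0.frequently (Filter.Eventually.frequently
      (Filter.Eventually.of_forall fun t => hfreal t))
  have hEq : Set.EqOn f 0 S :=
    hfa.eqOn_zero_of_preconnected_of_frequently_eq_zero hSconv.isPreconnected h0S hfreq
  -- the pole point
  set p : ℂ := (μ j : ℂ) + ((Real.pi * σ j : ℝ) : ℂ) * I with hp
  have hpim : p.im = Real.pi * σ j := by simp [hp]
  have hpre : p.re = μ j := by simp [hp]
  -- denominators of other terms do not vanish at p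
  have hdenp : ∀ i ∈ T, i ≠ j → 1 + Complex.exp (-(p - (μ i:ℂ)) / (σ i:ℂ)) ≠ 0 := by
    intro i hiT hij
    have hσij : σ j ≤ σ i := hjmin i hiT
    have him : (-(p - (μ i : ℂ)) / (σ i : ℂ)).im = -(Real.pi * σ j) / σ i := by
      simp [Complex.div_ofReal_im, hp]
    rcases lt_or_eq_of_le hσij with hlt | heq
    · apply aux_one_add_exp_ne_zero
      rw [him, abs_div, abs_neg, abs_of_pos (hσ i), div_lt_iff₀ (hσ i),
        abs_of_pos (by positivity : (0:ℝ) < Real.pi * σ j)]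
      nlinarith
    · apply aux_one_add_exp_ne_zero'
      · rw [him, ← heq]
        field_simp
      · have hre : (-(p - (μ i : ℂ)) / (σ i : ℂ)).re = -(μ j - μ i) / σ i := by
          simp [Complex.div_ofReal_re, hp]
        rw [hre]
        have hμ : μ i ≠ μ j := by
          intro hμeq
          exact hij (hdist (show (μ i, σ i) = (μ j, σ j) by rw [hμeq, ← heq]))
        exact div_ne_zero (neg_ne_zero.mpr (sub_ne_zero.mpr (Ne.symm hμ)))
          (ne_of_gt (hσ i))
  -- the terms of `(-(t)*I) * f (p - t*I)` and their limits as `t → 0⁺`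
  have hterm : ∀ i ∈ T,
      Tendsto (fun t : ℝ => (-(t:ℂ) * I) *
        ((d i : ℂ) * (1 + Complex.exp (-((p - (t:ℂ) * I) - μ i) / σ i))⁻¹))
      (𝓝[>] (0:ℝ)) (𝓝 (if i = j then (d j : ℂ) * σ j else 0)) := by
    intro i hiT
    rcases eq_or_ne i j with rfl | hij
    · simp only [if_pos]
      have hne : (σ i : ℂ) ≠ 0 := by exact_mod_cast (ne_of_gt (hσ i))
      have hptw : ∀ t : ℝ, (-(t:ℂ) * I) *
          ((d i : ℂ) * (1 + Complex.exp (-((p - (t:ℂ) * I) - μ i) / σ i))⁻¹)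
          = ((d i : ℂ) * σ i) *
            ((((t / σ i : ℝ) : ℂ) * I) / (Complex.exp ((((t / σ i : ℝ)) : ℂ) * I) - 1)) := by
        intro t
        have harg : -((p - (t:ℂ) * I) - μ i) / σ i
            = ((t / σ i : ℝ) : ℂ) * I - Real.pi * I := by
          rw [hp]
          push_cast
          field_simp
          ring
        rw [harg, Complex.exp_sub, Complex.exp_pi_mul_I]
        set e := Complex.exp (((t / σ i : ℝ) : ℂ) * I) with he
        rw [show (1 + e / (-1)) = -(e - 1) by ring, inv_neg]
        have hcancel : (σ i : ℂ) * ((t : ℂ) / (σ i : ℂ)) = (t : ℂ) := by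
          field_simp
        push_cast
        rw [div_eq_mul_inv]
        linear_combination (-(d i : ℂ)) * I * (e - 1)⁻¹ * hcancel
      have hw : Tendsto (fun t : ℝ => (((t / σ i : ℝ) : ℂ) * I))
          (𝓝[>] (0:ℝ)) (𝓝[≠] (0:ℂ)) := by
        apply tendsto_nhdsWithin_of_tendsto_nhds_of_eventually_within
        · have hcont : Continuous (fun t : ℝ => (((t / σ i : ℝ) : ℂ) * I)) := by
            continuity
          simpa using (hcont.tendsto 0).mono_left nhdsWithin_le_nhds
        · filter_upwards [self_mem_nhdsWithin] with t ht
          simp only [Set.mem_compl_iff, Set.mem_singleton_iff]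
          have htσ : t / σ i ≠ 0 := ne_of_gt (div_pos ht (hσ i))
          exact mul_ne_zero (by exact_mod_cast htσ) I_ne_zero
      have h2 := (aux_tendsto_div_exp_sub_one.comp hw).const_mul ((d i : ℂ) * σ i)
      simp only [Function.comp_def, mul_one] at h2
      exact h2.congr (fun t => (hptw t).symm)
    · simp only [if_neg hij]
      have hc : ContinuousAt (fun t : ℝ => (-(t:ℂ) * I) *
          ((d i : ℂ) * (1 + Complex.exp (-((p - (t:ℂ) * I) - μ i) / σ i))⁻¹)) 0 := by
        apply ContinuousAt.mul
        · fun_prop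
        apply ContinuousAt.mul continuousAt_const
        apply ContinuousAt.inv₀
        · fun_prop
        · simpa using hdenp i hiT hij
      have h3 := hc.tendsto.mono_left (nhdsWithin_le_nhds (s := Set.Ioi (0:ℝ)))
      simpa using h3
  have hGlim : Tendsto (fun t : ℝ => ∑ i ∈ T, (-(t:ℂ) * I) *
      ((d i : ℂ) * (1 + Complex.exp (-((p - (t:ℂ) * I) - μ i) / σ i))⁻¹))
      (𝓝[>] (0:ℝ)) (𝓝 ((d j : ℂ) * σ j)) := by
    have h4 := tendsto_finset_sum T hterm
    simpa [Finset.sum_ite_eq', hjT] using h4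
  have hGzero : Tendsto (fun t : ℝ => ∑ i ∈ T, (-(t:ℂ) * I) *
      ((d i : ℂ) * (1 + Complex.exp (-((p - (t:ℂ) * I) - μ i) / σ i))⁻¹))
      (𝓝[>] (0:ℝ)) (𝓝 0) := by
    have hev : ∀ᶠ (t : ℝ) in 𝓝[>] (0:ℝ), (∑ i ∈ T, (-(t:ℂ) * I) *
        ((d i : ℂ) * (1 + Complex.exp (-((p - (t:ℂ) * I) - μ i) / σ i))⁻¹)) = 0 := by
      filter_upwards [Ioo_mem_nhdsGT_of_mem
        (Set.mem_Ico.mpr ⟨le_refl (0:ℝ), mul_pos hπ hσj⟩)] with t ht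
      have hmem : (p - (t:ℂ) * I) ∈ S := by
        simp only [hS, Set.mem_preimage, Set.mem_Ioo, Complex.sub_im, hp]
        simp only [Complex.add_im, Complex.ofReal_im, Complex.mul_im, Complex.ofReal_re,
          Complex.I_im, Complex.I_re, mul_zero, mul_one, zero_add]
        constructor <;> nlinarith [ht.1, ht.2]
      have hzero : f (p - (t:ℂ) * I) = 0 := hEq hmem
      have : ∑ i ∈ T, (-(t:ℂ) * I) *
          ((d i : ℂ) * (1 + Complex.exp (-((p - (t:ℂ) * I) - μ i) / σ i))⁻¹)
          = (-(t:ℂ) * I) * f (p - (t:ℂ) * I) := by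
        rw [hf, Finset.mul_sum]
      rw [this, hzero, mul_zero]
    exact Tendsto.congr' (hev.mono fun t ht => ht.symm) tendsto_const_nhds
  have hueq : (d j : ℂ) * (σ j : ℂ) = 0 := tendsto_nhds_unique hGlim hGzero
  have hreq : d j * σ j = 0 := by exact_mod_cast hueq
  rcases mul_eq_zero.mp hreq with h1 | h1
  · exact hdj h1
  · exact (ne_of_gt hσj) h1
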